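/- Let ξ ∈ L², S a continuous process with E[sup_t S_t²] < ∞, and ν ≤ T a stopping time. Then e^{−n(T−ν)}ξ + n∫_ν^T e^{−n(s−ν)} S_s ds converges to ξ·1_{ν=T} + S_ν·1_{ν<T} almost surely and in L² as n → ∞. -/

import Mathlib

open MeasureTheory Set Filter

noncomputable section

/-- Value of the exponential kernel integral. -/
lemma exp_kernel_integral {c : ℝ} (hc : c ≠ 0) (A B : ℝ) :
    ∫ s in A..B, Real.exp (-c * (s - A)) = (1 - Real.exp (-c * (B - A))) / c := by
  have h1 : ∀ s : ℝ, Real.exp (-c * (s - A)) = Real.exp (-c * s + c * A) := by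
    intro s; ring_nf
  rw [intervalIntegral.integral_congr (g := fun s => Real.exp (-c * s + c * A))
    (fun s _ => h1 s)]
  rw [intervalIntegral.integral_comp_mul_add Real.exp (neg_ne_zero.mpr hc) (c * A)]
  rw [integral_exp]
  have h2 : -c * A + c * A = 0 := by ring
  have h3 : -c * B + c * A = -c * (B - A) := by ring
  rw [h2, h3, Real.exp_zero, smul_eq_mul]
  field_simp
  ring

/-- Bound for the exponential kernel term. -/
lemma exp_kernel_bound {c A B M : ℝ} (hc : 0 < c) (hAB : A ≤ B) (hM : 0 ≤ M)
    {f : ℝ → ℝ} (hf : Continuous f) (hfM : ∀ s ∈ Icc A B, |f s| ≤ M) :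
    |c * ∫ s in A..B, Real.exp (-c * (s - A)) * f s| ≤ M := by
  have hint1 : IntervalIntegrable (fun s => |Real.exp (-c * (s - A)) * f s|) volume A B :=
    (((Real.continuous_exp.comp (by continuity)).mul hf).abs).intervalIntegrable A B
  have hint2 : IntervalIntegrable (fun s => Real.exp (-c * (s - A)) * M) volume A B :=
    ((Real.continuous_exp.comp (by continuity)).mul continuous_const).intervalIntegrable A B
  have h1 : |∫ s in A..B, Real.exp (-c * (s - A)) * f s|
      ≤ ∫ s in A..B, |Real.exp (-c * (s - A)) * f s| :=
    intervalIntegral.abs_integral_le_integral_abs hAB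
  have habs : ∀ s, |Real.exp (-c * (s - A)) * f s| = Real.exp (-c * (s - A)) * |f s| := by
    intro s; rw [abs_mul, abs_of_pos (Real.exp_pos _)]
  have h2 : ∫ s in A..B, |Real.exp (-c * (s - A)) * f s|
      ≤ ∫ s in A..B, Real.exp (-c * (s - A)) * M := by
    refine intervalIntegral.integral_mono_on hAB hint1 hint2 ?_
    intro s hs
    rw [habs s]
    exact mul_le_mul_of_nonneg_left (hfM s hs) (Real.exp_pos _).le
  have h3 : ∫ s in A..B, Real.exp (-c * (s - A)) * M
      = (1 - Real.exp (-c * (B - A))) / c * M := by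
    rw [intervalIntegral.integral_mul_const, exp_kernel_integral hc.ne' A B]
  have hexp1 : Real.exp (-c * (B - A)) ≤ 1 := by
    rw [← Real.exp_zero]
    exact Real.exp_le_exp.mpr (by nlinarith)
  have hexp0 : 0 < Real.exp (-c * (B - A)) := Real.exp_pos _
  rw [abs_mul, abs_of_pos hc]
  calc c * |∫ s in A..B, Real.exp (-c * (s - A)) * f s|
      ≤ c * ((1 - Real.exp (-c * (B - A))) / c * M) := by
        refine mul_le_mul_of_nonneg_left ?_ hc.le
        exact h1.trans (h2.trans_eq h3)
    _ = (1 - Real.exp (-c * (B - A))) * M := by field_simp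
    _ ≤ 1 * M := by nlinarith
    _ = M := one_mul M

/-- Convergence of the exponential kernel to a point evaluation. -/
lemma exp_kernel_tendsto {A B : ℝ} (hAB : A < B) {f : ℝ → ℝ} (hf : Continuous f) :
    Tendsto (fun n : ℕ => (n : ℝ) * ∫ s in A..B, Real.exp (-(n : ℝ) * (s - A)) * f s)
      atTop (nhds (f A)) := by
  obtain ⟨C, hC⟩ := (isCompact_Icc (a := A) (b := B)).exists_bound_of_continuousOn
    hf.continuousOn
  set M : ℝ := max C 0 with hMdef
  have hM0 : 0 ≤ M := le_max_right _ _
  have hfM : ∀ s ∈ Icc A B, |f s| ≤ M := fun s hs => by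
    have := hC s hs; rw [Real.norm_eq_abs] at this; exact this.trans (le_max_left _ _)
  set F : ℕ → ℝ → ℝ := fun n u => (Ioc (0 : ℝ) ((n : ℝ) * (B - A))).indicator
      (fun u => Real.exp (-u) * f (A + u / (n : ℝ))) u with hFdef
  -- change of variables
  have key : ∀ n : ℕ, 1 ≤ n →
      (n : ℝ) * ∫ s in A..B, Real.exp (-(n : ℝ) * (s - A)) * f s = ∫ u, F n u := by
    intro n hn
    have hn0 : (n : ℝ) ≠ 0 := Nat.cast_ne_zero.mpr (by omega)
    have hnpos : (0 : ℝ) < n := by positivity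
    have h1 : ∀ s ∈ uIcc A B, Real.exp (-(n : ℝ) * (s - A)) * f s
        = (fun u => Real.exp (-u) * f (A + u / (n : ℝ))) ((n : ℝ) * s + (-(n : ℝ) * A)) := by
      intro s _
      have e2 : A + (n : ℝ) * (s - A) / (n : ℝ) = s := by field_simp; ring
      simp only
      rw [show (n : ℝ) * s + -(n : ℝ) * A = (n : ℝ) * (s - A) from by ring, e2, neg_mul]
    rw [intervalIntegral.integral_congr h1,
      intervalIntegral.integral_comp_mul_add (fun u => Real.exp (-u) * f (A + u / (n : ℝ)))
        hn0 (-(n : ℝ) * A)]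
    have e3 : (n : ℝ) * A + -(n : ℝ) * A = 0 := by ring
    have e4 : (n : ℝ) * B + -(n : ℝ) * A = (n : ℝ) * (B - A) := by ring
    rw [e3, e4, smul_eq_mul, ← mul_assoc, mul_inv_cancel₀ hn0, one_mul]
    rw [intervalIntegral.integral_of_le (by nlinarith)]
    rw [← integral_indicator measurableSet_Ioc]
  -- dominated convergence
  have hmeas : ∀ n : ℕ, AEStronglyMeasurable (F n) volume := by
    intro n
    exact ((Real.continuous_exp.comp continuous_neg).mul
      (hf.comp (continuous_const.add (continuous_id.div_const _)))).aestronglyMeasurable.indicator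
      measurableSet_Ioc
  have hbound_int : Integrable ((Ioi (0 : ℝ)).indicator fun u => M * Real.exp (-u)) volume := by
    rw [integrable_indicator_iff measurableSet_Ioi]
    have : IntegrableOn (fun u : ℝ => Real.exp (-u)) (Ioi (0 : ℝ)) volume := by
      simpa using exp_neg_integrableOn_Ioi 0 one_pos
    exact this.const_mul M
  have h_bound : ∀ n : ℕ, ∀ᵐ u : ℝ,
      ‖F n u‖ ≤ (Ioi (0 : ℝ)).indicator (fun u => M * Real.exp (-u)) u := by
    intro n
    refine Filter.Eventually.of_forall fun u => ?_
    by_cases hu : u ∈ Ioc (0 : ℝ) ((n : ℝ) * (B - A))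
    · have hn0 : (0 : ℝ) < n := by
        rcases Nat.eq_zero_or_pos n with h | h
        · exfalso; rw [h] at hu; simp at hu
        · exact_mod_cast h
      rw [hFdef]
      simp only [indicator_of_mem hu, indicator_of_mem (mem_Ioi.mpr hu.1)]
      rw [Real.norm_eq_abs, abs_mul, abs_of_pos (Real.exp_pos _), mul_comm M]
      refine mul_le_mul_of_nonneg_left ?_ (Real.exp_pos _).le
      refine hfM _ ⟨le_add_of_nonneg_right (div_nonneg hu.1.le hn0.le), ?_⟩
      have : u / (n : ℝ) ≤ B - A := (div_le_iff₀ hn0).mpr (by linarith [hu.2, mul_comm (n : ℝ) (B - A)])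
      linarith
    · rw [hFdef]
      simp only [indicator_of_notMem hu, norm_zero]
      exact indicator_nonneg (fun u _ => mul_nonneg hM0 (Real.exp_pos _).le) u
  have h_lim : ∀ᵐ u : ℝ, Tendsto (fun n => F n u) atTop
      (nhds ((Ioi (0 : ℝ)).indicator (fun u => Real.exp (-u) * f A) u)) := by
    refine Filter.Eventually.of_forall fun u => ?_
    by_cases hu : 0 < u
    · rw [indicator_of_mem (mem_Ioi.mpr hu)]
      have hev : ∀ᶠ n : ℕ in atTop, F n u = Real.exp (-u) * f (A + u / (n : ℝ)) := by
        have ht : Tendsto (fun n : ℕ => (n : ℝ) * (B - A)) atTop atTop :=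
          Tendsto.atTop_mul_const (sub_pos.mpr hAB) tendsto_natCast_atTop_atTop
        filter_upwards [ht.eventually_ge_atTop u] with n hn
        exact Set.indicator_of_mem (show u ∈ Ioc (0:ℝ) ((n:ℝ)*(B-A)) from ⟨hu, hn⟩) _
      have hnice : Tendsto (fun n : ℕ => Real.exp (-u) * f (A + u / (n : ℝ))) atTop
          (nhds (Real.exp (-u) * f A)) := by
        refine tendsto_const_nhds.mul ((hf.tendsto A).comp ?_)
        have : Tendsto (fun n : ℕ => A + u / (n : ℝ)) atTop (nhds (A + 0)) :=
          tendsto_const_nhds.add (tendsto_const_div_atTop_nhds_zero_nat u)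
        simpa using this
      exact hnice.congr' (Filter.EventuallyEq.symm hev)
    · rw [indicator_of_notMem (by simpa using hu)]
      refine tendsto_const_nhds.congr' ?_
      refine Filter.Eventually.of_forall fun n => ?_
      rw [hFdef]
      exact (indicator_of_notMem (fun h => hu h.1) _).symm
  have hDCT := tendsto_integral_of_dominated_convergence
    ((Ioi (0 : ℝ)).indicator fun u => M * Real.exp (-u)) hmeas hbound_int h_bound h_lim
  have hval : ∫ u, (Ioi (0 : ℝ)).indicator (fun u => Real.exp (-u) * f A) u = f A := by
    rw [integral_indicator measurableSet_Ioi, integral_mul_const,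
      integral_exp_neg_Ioi_zero, one_mul]
  rw [hval] at hDCT
  refine hDCT.congr' ?_
  filter_upwards [eventually_ge_atTop 1] with n hn
  exact (key n hn).symm

/-- Exponential-kernel convergence used in the penalization argument: for `ξ ∈ L²`,
a continuous process `S` with `E[sup_t S_t²] < ∞` and a random time `ν` with `0 ≤ ν ≤ T`,
`e^{-n(T-ν)} ξ + n ∫_ν^T e^{-n(s-ν)} S_s ds → ξ·1_{ν=T} + S_ν·1_{ν<T}`
almost surely and in `L²` as `n → ∞`. -/
theorem exponential_kernel_convergence
    {Ω : Type*} [MeasurableSpace Ω] (P : Measure Ω) [IsProbabilityMeasure P]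
    (T : ℝ) (hT : 0 < T)
    (ξ : Ω → ℝ) (S : ℝ → Ω → ℝ) (ν : Ω → ℝ)
    (hξm : Measurable ξ) (hξ2 : Integrable (fun ω => (ξ ω) ^ 2) P)
    (hScont : ∀ ω, Continuous (fun t => S t ω))
    (hSmeas : Measurable (Function.uncurry fun t ω => S t ω))
    (hSint : Integrable (fun ω => ⨆ t ∈ Icc (0 : ℝ) T, (S t ω) ^ 2) P)
    (hνm : Measurable ν) (hν : ∀ ω, ν ω ∈ Icc (0 : ℝ) T) :
    (∀ᵐ ω ∂P,
      Filter.Tendsto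
        (fun n : ℕ => Real.exp (-(n : ℝ) * (T - ν ω)) * ξ ω
          + (n : ℝ) * ∫ s in (ν ω)..T, Real.exp (-(n : ℝ) * (s - ν ω)) * S s ω)
        Filter.atTop
        (nhds (if ν ω = T then ξ ω else S (ν ω) ω))) ∧
    Filter.Tendsto
      (fun n : ℕ => ∫ ω,
        (Real.exp (-(n : ℝ) * (T - ν ω)) * ξ ω
          + (n : ℝ) * (∫ s in (ν ω)..T, Real.exp (-(n : ℝ) * (s - ν ω)) * S s ω)
          - (if ν ω = T then ξ ω else S (ν ω) ω)) ^ 2 ∂P)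
      Filter.atTop (nhds 0) := by
  set Xlim : Ω → ℝ := fun ω => if ν ω = T then ξ ω else S (ν ω) ω with hXlimdef
  -- pointwise (everywhere) convergence
  have haspart : ∀ ω, Filter.Tendsto
      (fun n : ℕ => Real.exp (-(n : ℝ) * (T - ν ω)) * ξ ω
        + (n : ℝ) * ∫ s in (ν ω)..T, Real.exp (-(n : ℝ) * (s - ν ω)) * S s ω)
      Filter.atTop (nhds (Xlim ω)) := by
    intro ω
    by_cases h : ν ω = T
    · rw [hXlimdef]; simp only [if_pos h]
      have heq : (fun n : ℕ => Real.exp (-(n : ℝ) * (T - ν ω)) * ξ ω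
          + (n : ℝ) * ∫ s in (ν ω)..T, Real.exp (-(n : ℝ) * (s - ν ω)) * S s ω)
          = fun _ => ξ ω := by
        funext n; rw [h]; simp
      rw [heq]; exact tendsto_const_nhds
    · rw [hXlimdef]; simp only [if_neg h]
      have hlt : ν ω < T := lt_of_le_of_ne (hν ω).2 h
      have h1 : Filter.Tendsto (fun n : ℕ => Real.exp (-(n : ℝ) * (T - ν ω)) * ξ ω)
          Filter.atTop (nhds 0) := by
        have ht : Filter.Tendsto (fun n : ℕ => -((n : ℝ) * (T - ν ω)))
            Filter.atTop Filter.atBot :=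
          Filter.tendsto_neg_atTop_atBot.comp
            (Filter.Tendsto.atTop_mul_const (sub_pos.mpr hlt) tendsto_natCast_atTop_atTop)
        have := (Real.tendsto_exp_atBot.comp ht).mul_const (ξ ω)
        simpa [Function.comp, neg_mul] using this
      have h2 := exp_kernel_tendsto hlt (hScont ω)
      simpa using h1.add h2
  refine ⟨Filter.Eventually.of_forall haspart, ?_⟩
  -- measurability of the limit
  have hXlimm : Measurable Xlim := by
    rw [hXlimdef]
    exact Measurable.ite (hνm (measurableSet_singleton T)) hξm
      (hSmeas.comp (hνm.prodMk measurable_id))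
  -- measurability of the integral term
  have hIm : ∀ n : ℕ, Measurable
      (fun ω => ∫ s in (ν ω)..T, Real.exp (-(n : ℝ) * (s - ν ω)) * S s ω) := by
    intro n
    have heq : (fun ω => ∫ s in (ν ω)..T, Real.exp (-(n : ℝ) * (s - ν ω)) * S s ω)
        = fun ω => ∫ s, (if ν ω < s ∧ s ≤ T then Real.exp (-(n : ℝ) * (s - ν ω)) * S s ω
            else 0) := by
      funext ω
      rw [intervalIntegral.integral_of_le (hν ω).2, ← integral_indicator measurableSet_Ioc]
      congr 1
      funext s
      simp [Set.indicator_apply, Set.mem_Ioc]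
    rw [heq]
    have hset : MeasurableSet {p : Ω × ℝ | ν p.1 < p.2 ∧ p.2 ≤ T} := by
      rw [Set.setOf_and]
      exact (measurableSet_lt (hνm.comp measurable_fst) measurable_snd).inter
        (measurableSet_le measurable_snd measurable_const)
    have hfun : Measurable (fun p : Ω × ℝ => Real.exp (-(n : ℝ) * (p.2 - ν p.1)) * S p.2 p.1) :=
      (Real.measurable_exp.comp
        ((measurable_snd.sub (hνm.comp measurable_fst)).const_mul _)).mul
        (hSmeas.comp (measurable_snd.prodMk measurable_fst))
    have hsm : StronglyMeasurable (fun p : Ω × ℝ =>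
        if ν p.1 < p.2 ∧ p.2 ≤ T then Real.exp (-(n : ℝ) * (p.2 - ν p.1)) * S p.2 p.1 else 0) :=
      (Measurable.ite hset hfun measurable_const).stronglyMeasurable
    exact hsm.integral_prod_right'.measurable
  have hXm : ∀ n : ℕ, Measurable (fun ω => Real.exp (-(n : ℝ) * (T - ν ω)) * ξ ω
      + (n : ℝ) * ∫ s in (ν ω)..T, Real.exp (-(n : ℝ) * (s - ν ω)) * S s ω) := fun n =>
    ((Real.measurable_exp.comp ((measurable_const.sub hνm).const_mul _)).mul hξm).add
      ((hIm n).const_mul _)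
  -- the dominating function
  set Q : Ω → ℝ := fun ω => ⨆ t ∈ Icc (0 : ℝ) T, (S t ω) ^ 2 with hQdef
  have hQle : ∀ ω, ∀ t ∈ Icc (0 : ℝ) T, (S t ω) ^ 2 ≤ Q ω := by
    intro ω t ht
    obtain ⟨C, hC⟩ := (isCompact_Icc (a := (0 : ℝ)) (b := T)).exists_bound_of_continuousOn
      ((hScont ω).pow 2).continuousOn
    have hub : ∀ r : ℝ, (⨆ _ : r ∈ Icc (0 : ℝ) T, (S r ω) ^ 2) ≤ max C 0 := by
      intro r
      by_cases hr : r ∈ Icc (0 : ℝ) T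
      · rw [ciSup_pos hr]
        have := hC r hr
        rw [Real.norm_eq_abs] at this
        exact ((le_abs_self _).trans this).trans (le_max_left _ _)
      · haveI : IsEmpty (r ∈ Icc (0 : ℝ) T) := ⟨hr⟩
        rw [Real.iSup_of_isEmpty]
        exact le_max_right _ _
    have hbdd : BddAbove (Set.range fun r => ⨆ _ : r ∈ Icc (0 : ℝ) T, (S r ω) ^ 2) :=
      ⟨max C 0, by rintro x ⟨r, rfl⟩; exact hub r⟩
    have hle := le_ciSup hbdd t
    rw [ciSup_pos ht] at hle
    exact hle
  have hQ0 : ∀ ω, 0 ≤ Q ω := fun ω =>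
    (sq_nonneg (S 0 ω)).trans (hQle ω 0 ⟨le_refl _, hT.le⟩)
  have hSb : ∀ ω, ∀ t ∈ Icc (0 : ℝ) T, |S t ω| ≤ Real.sqrt (Q ω) := fun ω t ht =>
    Real.abs_le_sqrt (hQle ω t ht)
  -- uniform bound on the approximants
  have hXb : ∀ (n : ℕ) ω, |Real.exp (-(n : ℝ) * (T - ν ω)) * ξ ω
      + (n : ℝ) * ∫ s in (ν ω)..T, Real.exp (-(n : ℝ) * (s - ν ω)) * S s ω|
      ≤ |ξ ω| + Real.sqrt (Q ω) := by
    intro n ω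
    have hb1 : |Real.exp (-(n : ℝ) * (T - ν ω)) * ξ ω| ≤ |ξ ω| := by
      rw [abs_mul, abs_of_pos (Real.exp_pos _)]
      have hele : Real.exp (-(n : ℝ) * (T - ν ω)) ≤ 1 := by
        rw [← Real.exp_zero]
        apply Real.exp_le_exp.mpr
        have h1 := (hν ω).2
        have h2 : (0 : ℝ) ≤ (n : ℝ) := Nat.cast_nonneg n
        nlinarith
      nlinarith [abs_nonneg (ξ ω), Real.exp_pos (-(n : ℝ) * (T - ν ω))]
    have hb2 : |(n : ℝ) * ∫ s in (ν ω)..T, Real.exp (-(n : ℝ) * (s - ν ω)) * S s ω|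
        ≤ Real.sqrt (Q ω) := by
      rcases Nat.eq_zero_or_pos n with h | h
      · subst h; simp [Real.sqrt_nonneg (Q ω)]
      · have hn0 : (0 : ℝ) < n := by exact_mod_cast h
        refine exp_kernel_bound hn0 (hν ω).2 (Real.sqrt_nonneg _) (hScont ω) ?_
        intro s hs
        exact hSb ω s ⟨le_trans (hν ω).1 hs.1, hs.2⟩
    exact (abs_add_le _ _).trans (add_le_add hb1 hb2)
  have hXlimb : ∀ ω, |Xlim ω| ≤ |ξ ω| + Real.sqrt (Q ω) := by
    intro ω
    rw [hXlimdef]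
    by_cases h : ν ω = T
    · simp only [if_pos h]
      exact le_add_of_nonneg_right (Real.sqrt_nonneg _)
    · simp only [if_neg h]
      have := hSb ω (ν ω) (hν ω)
      have := abs_nonneg (ξ ω)
      linarith
  -- dominated convergence in L²
  have hG : Integrable (fun ω => 8 * (ξ ω) ^ 2 + 8 * Q ω) P :=
    (hξ2.const_mul 8).add (hSint.const_mul 8)
  have hbound : ∀ n : ℕ, ∀ᵐ ω ∂P,
      ‖(Real.exp (-(n : ℝ) * (T - ν ω)) * ξ ω
        + (n : ℝ) * (∫ s in (ν ω)..T, Real.exp (-(n : ℝ) * (s - ν ω)) * S s ω)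
        - Xlim ω) ^ 2‖ ≤ 8 * (ξ ω) ^ 2 + 8 * Q ω := by
    intro n
    refine Filter.Eventually.of_forall fun ω => ?_
    rw [Real.norm_eq_abs, abs_of_nonneg (sq_nonneg _)]
    have key : ∀ x y : ℝ, |x| ≤ |ξ ω| + Real.sqrt (Q ω) → |y| ≤ |ξ ω| + Real.sqrt (Q ω) →
        (x - y) ^ 2 ≤ 8 * (ξ ω) ^ 2 + 8 * Q ω := by
      intro x y hx hy
      have h3 := Real.sq_sqrt (hQ0 ω)
      have h4 := Real.sqrt_nonneg (Q ω)
      nlinarith [sq_abs x, sq_abs y, abs_nonneg x, abs_nonneg y, sq_abs (ξ ω),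
        abs_nonneg (ξ ω), abs_mul x y, neg_abs_le (x * y),
        sq_nonneg (|ξ ω| - Real.sqrt (Q ω)), sq_nonneg (|x| - |y|)]
    exact key _ _ (hXb n ω) (hXlimb ω)
  have hlim : ∀ᵐ ω ∂P, Filter.Tendsto
      (fun n : ℕ => (Real.exp (-(n : ℝ) * (T - ν ω)) * ξ ω
        + (n : ℝ) * (∫ s in (ν ω)..T, Real.exp (-(n : ℝ) * (s - ν ω)) * S s ω)
        - Xlim ω) ^ 2) Filter.atTop (nhds 0) := by
    refine Filter.Eventually.of_forall fun ω => ?_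
    have h := (haspart ω).sub (tendsto_const_nhds (x := Xlim ω))
    have h2 := h.pow 2
    simpa [sub_self, zero_pow] using h2
  have hDCT : Filter.Tendsto
      (fun n : ℕ => ∫ ω,
        (Real.exp (-(n : ℝ) * (T - ν ω)) * ξ ω
          + (n : ℝ) * (∫ s in (ν ω)..T, Real.exp (-(n : ℝ) * (s - ν ω)) * S s ω)
          - Xlim ω) ^ 2 ∂P)
      Filter.atTop (nhds (∫ _ω, (0 : ℝ) ∂P)) :=
    tendsto_integral_of_dominated_convergence _
      (fun n => (((hXm n).sub hXlimm).pow_const 2).aestronglyMeasurable) hG hbound hlim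
  simpa using hDCT
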